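/- Fix a ReLU network architecture with input dimension d_in, output dimension d_out, layer dimensions N_0 = d_in, N_1, …, N_{L-1}, N_L = d_out, and let W = Σ_{l=1}^L (N_l·N_{l-1} + N_l) be the total number of parameters, so that each θ ∈ ℝ^W determines a network function φ_θ: ℝ^{d_in} → ℝ^{d_out}. Suppose M ∈ ℕ is such that for every choice of M samples (x_1,y_1), …, (x_M,y_M) with x_1,…,x_M ∈ ℝ^{d_in} distinct and y_1,…,y_M ∈ ℝ^{d_out} arbitrary, there exists θ ∈ ℝ^W with φ_θ(x_i) = y_i for all i = 1,…,M. Then W ≥ M·d_out. -/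

import Mathlib

open scoped BigOperators

noncomputable section

/-- The affine map `x ↦ A x + b`. -/
def affineApply {m n : ℕ} (A : Matrix (Fin m) (Fin n) ℝ) (b : Fin m → ℝ)
    (x : Fin n → ℝ) : Fin m → ℝ :=
  fun i => (∑ j, A i j * x j) + b i

/-- The output of the first `n` hidden layers (each affine layer followed by the
coordinatewise ReLU `t ↦ max t 0`). -/
def hiddenLayers (dims : ℕ → ℕ)
    (A : ∀ l : ℕ, Matrix (Fin (dims (l + 1))) (Fin (dims l)) ℝ)
    (b : ∀ l : ℕ, Fin (dims (l + 1)) → ℝ) :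
    (n : ℕ) → (Fin (dims 0) → ℝ) → (Fin (dims n) → ℝ)
  | 0 => fun x => x
  | n + 1 => fun x i => max (affineApply (A n) (b n) (hiddenLayers dims A b n x) i) 0

/-- The network function `φ_θ = T_{L+1} ∘ σ ∘ T_L ∘ ⋯ ∘ σ ∘ T_1` of a network with
`L + 1` affine layers (depth `L + 1`), layer dimensions `dims 0, …, dims (L+1)` and
parameters `θ = (A, b)`. -/
def realize (dims : ℕ → ℕ) (L : ℕ)
    (A : ∀ l : ℕ, Matrix (Fin (dims (l + 1))) (Fin (dims l)) ℝ)
    (b : ∀ l : ℕ, Fin (dims (l + 1)) → ℝ)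
    (x : Fin (dims 0) → ℝ) : Fin (dims (L + 1)) → ℝ :=
  affineApply (A L) (b L) (hiddenLayers dims A b L x)

/-! ### Auxiliary material for the proof -/

open Set

attribute [local instance] Matrix.normedAddCommGroup Matrix.normedSpace

/-- A linear map between finite-dimensional real normed spaces is `C¹`. -/
lemma contDiff_of_linear {E F : Type*} [NormedAddCommGroup E] [NormedSpace ℝ E]
    [FiniteDimensional ℝ E] [NormedAddCommGroup F] [NormedSpace ℝ F] {f : E → F}
    (hf : IsLinearMap ℝ f) : ContDiff ℝ 1 f :=
  (LinearMap.toContinuousLinearMap (hf.mk' f)).contDiff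

/-- The parameter space of the network. -/
abbrev PSpace (dims : ℕ → ℕ) (L : ℕ) := ∀ l : Fin (L + 1),
  Matrix (Fin (dims (l + 1))) (Fin (dims l)) ℝ × (Fin (dims (l + 1)) → ℝ)

/-- Extend a finitely indexed parameter vector to all of `ℕ` (by zero). -/
def Aext (dims : ℕ → ℕ) (L : ℕ) (θ : PSpace dims L) (l : ℕ) :
    Matrix (Fin (dims (l + 1))) (Fin (dims l)) ℝ :=
  if h : l < L + 1 then (θ ⟨l, h⟩).1 else 0

def bext (dims : ℕ → ℕ) (L : ℕ) (θ : PSpace dims L) (l : ℕ) :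
    Fin (dims (l + 1)) → ℝ :=
  if h : l < L + 1 then (θ ⟨l, h⟩).2 else 0

/-- The affine step of one layer, as a function of (parameters, input), is `C¹`. -/
lemma contDiff_step (dims : ℕ → ℕ) (L : ℕ) (n : ℕ) (hn : n < L + 1) :
    ContDiff ℝ 1 (fun p : PSpace dims L × (Fin (dims n) → ℝ) =>
      affineApply (p.1 ⟨n, hn⟩).1 (p.1 ⟨n, hn⟩).2 p.2) := by
  unfold affineApply
  apply contDiff_pi.2
  intro i
  apply ContDiff.add
  · apply ContDiff.sum
    intro j _
    exact (contDiff_of_linear ⟨fun a b => rfl, fun c a => rfl⟩).mul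
      (contDiff_of_linear ⟨fun a b => rfl, fun c a => rfl⟩)
  · exact contDiff_of_linear ⟨fun a b => rfl, fun c a => rfl⟩

/-- Coordinatewise ReLU is `1`-Lipschitz. -/
lemma relu_lipschitz (k : ℕ) :
    LipschitzWith 1 (fun v : Fin k → ℝ => fun i => max (v i) 0) := by
  apply LipschitzWith.of_dist_le_mul
  intro v w
  simp only [NNReal.coe_one, one_mul]
  refine (dist_pi_le_iff dist_nonneg).2 fun i => ?_
  calc dist (max (v i) 0) (max (w i) 0) ≤ dist (v i) (w i) := by
        rw [Real.dist_eq, Real.dist_eq]; exact abs_max_sub_max_le_abs _ _ _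
    _ ≤ dist v w := dist_le_pi_dist v w i

/-- A map into a finite product is locally Lipschitz if each coordinate is. -/
lemma locallyLipschitz_pi {α : Type*} [PseudoEMetricSpace α] {ι : Type*} [Fintype ι]
    {E : ι → Type*} [∀ i, PseudoEMetricSpace (E i)] {f : α → ∀ i, E i}
    (h : ∀ i, LocallyLipschitz fun a => f a i) : LocallyLipschitz f := by
  intro x
  choose K t ht hK using fun i => h i x
  refine ⟨Finset.univ.sup K, ⋂ i, t i, Filter.iInter_mem.2 ht, ?_⟩
  intro a ha b hb
  rw [edist_pi_def]
  refine Finset.sup_le fun i _ => ?_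
  calc edist (f a i) (f b i) ≤ K i * edist a b :=
        hK i (mem_iInter.1 ha i) (mem_iInter.1 hb i)
    _ ≤ (Finset.univ.sup K : NNReal) * edist a b := by
        gcongr
        exact_mod_cast Finset.le_sup (Finset.mem_univ i)

/-- The hidden-layer output depends only on the first `n` layers' parameters. -/
lemma hiddenLayers_congr (dims : ℕ → ℕ)
    (A A' : ∀ l : ℕ, Matrix (Fin (dims (l + 1))) (Fin (dims l)) ℝ)
    (b b' : ∀ l : ℕ, Fin (dims (l + 1)) → ℝ) (n : ℕ)
    (h : ∀ l, l < n → A l = A' l ∧ b l = b' l) (x : Fin (dims 0) → ℝ) :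
    hiddenLayers dims A b n x = hiddenLayers dims A' b' n x := by
  induction n with
  | zero => rfl
  | succ n ih =>
    have hA := (h n (Nat.lt_succ_self n)).1
    have hb := (h n (Nat.lt_succ_self n)).2
    simp only [hiddenLayers, ih (fun l hl => h l (hl.trans (Nat.lt_succ_self n))), hA, hb]

/-- For a fixed input, the hidden-layer output is a locally Lipschitz function
of the parameters. -/
lemma ll_hidden (dims : ℕ → ℕ) (L : ℕ) (x0 : Fin (dims 0) → ℝ) :
    ∀ n, n ≤ L + 1 → LocallyLipschitz
      (fun θ : PSpace dims L => hiddenLayers dims (Aext dims L θ) (bext dims L θ) n x0) := by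
  intro n
  induction n with
  | zero => exact fun _ => LocallyLipschitz.const _
  | succ n ih =>
    intro hn
    have hn' : n < L + 1 := hn
    have key : (fun θ : PSpace dims L =>
        hiddenLayers dims (Aext dims L θ) (bext dims L θ) (n + 1) x0) =
        (fun v : Fin (dims (n + 1)) → ℝ => fun i => max (v i) 0) ∘
        (fun p : PSpace dims L × (Fin (dims n) → ℝ) =>
          affineApply (p.1 ⟨n, hn'⟩).1 (p.1 ⟨n, hn'⟩).2 p.2) ∘
        (fun θ => (θ, hiddenLayers dims (Aext dims L θ) (bext dims L θ) n x0)) := by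
      funext θ
      simp only [hiddenLayers, Function.comp_apply, Aext, bext, dif_pos hn']
    rw [key]
    exact (relu_lipschitz _).locallyLipschitz.comp
      ((contDiff_step dims L n hn').locallyLipschitz.comp
        (LocallyLipschitz.id.prodMk (ih (Nat.le_of_succ_le hn))))

/-- For a fixed input, the network output is a locally Lipschitz function of
the parameters. -/
lemma ll_realize (dims : ℕ → ℕ) (L : ℕ) (x0 : Fin (dims 0) → ℝ) :
    LocallyLipschitz
      (fun θ : PSpace dims L => realize dims L (Aext dims L θ) (bext dims L θ) x0) := by
  have hL : L < L + 1 := Nat.lt_succ_self L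
  have key : (fun θ : PSpace dims L =>
      realize dims L (Aext dims L θ) (bext dims L θ) x0) =
      (fun p : PSpace dims L × (Fin (dims L) → ℝ) =>
        affineApply (p.1 ⟨L, hL⟩).1 (p.1 ⟨L, hL⟩).2 p.2) ∘
      (fun θ => (θ, hiddenLayers dims (Aext dims L θ) (bext dims L θ) L x0)) := by
    funext θ
    simp only [realize, Function.comp_apply, Aext, bext, dif_pos hL]
  rw [key]
  exact (contDiff_step dims L L hL).locallyLipschitz.comp
    (LocallyLipschitz.id.prodMk (ll_hidden dims L x0 L (Nat.le_succ L)))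

lemma realize_ext (dims : ℕ → ℕ) (L : ℕ)
    (A : ∀ l : ℕ, Matrix (Fin (dims (l + 1))) (Fin (dims l)) ℝ)
    (b : ∀ l : ℕ, Fin (dims (l + 1)) → ℝ) (x0 : Fin (dims 0) → ℝ) :
    realize dims L (Aext dims L fun l => (A l, b l)) (bext dims L fun l => (A l, b l)) x0
      = realize dims L A b x0 := by
  have hco : ∀ l, l < L + 1 →
      Aext dims L (fun l' : Fin (L + 1) => (A l', b l')) l = A l ∧
      bext dims L (fun l' : Fin (L + 1) => (A l', b l')) l = b l := by
    intro l hl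
    constructor <;> simp [Aext, bext, dif_pos hl] <;> intro h <;> exact absurd h (by omega)
  unfold realize
  rw [(hco L (Nat.lt_succ_self L)).1, (hco L (Nat.lt_succ_self L)).2,
    hiddenLayers_congr dims _ A _ b L
      (fun l hl => hco l (hl.trans (Nat.lt_succ_self L))) x0]

/-- Proposition `Hausdorff estimate`: if a fixed architecture can
interpolate every set of `M` samples with distinct inputs, then the number of
parameters `W = Σ_l (N_l N_{l-1} + N_l)` is at least `M · d_out`. -/
theorem stmt8 (L : ℕ) (dims : ℕ → ℕ) (hdin : 0 < dims 0) (M : ℕ)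
    (h : ∀ x : Fin M → (Fin (dims 0) → ℝ), Function.Injective x →
      ∀ y : Fin M → (Fin (dims (L + 1)) → ℝ),
        ∃ (A : ∀ l : ℕ, Matrix (Fin (dims (l + 1))) (Fin (dims l)) ℝ)
          (b : ∀ l : ℕ, Fin (dims (l + 1)) → ℝ),
          ∀ i, realize dims L A b (x i) = y i) :
    M * dims (L + 1) ≤
      ∑ l ∈ Finset.range (L + 1), (dims (l + 1) * dims l + dims (l + 1)) := by
  classical
  -- distinct inputs
  set x : Fin M → (Fin (dims 0) → ℝ) :=
    fun i j => if j = ⟨0, hdin⟩ then (i : ℝ) else 0 with hxdef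
  have hxinj : Function.Injective x := by
    intro i i' hx
    have h0 : ((i : ℕ) : ℝ) = ((i' : ℕ) : ℝ) := by
      simpa [x] using congrFun hx ⟨0, hdin⟩
    exact Fin.ext (by exact_mod_cast h0)
  -- the parameter-to-samples map
  set F : PSpace dims L → (Fin M → (Fin (dims (L + 1)) → ℝ)) :=
    fun θ i => realize dims L (Aext dims L θ) (bext dims L θ) (x i) with hFdef
  have hsurj : Function.Surjective F := by
    intro y
    obtain ⟨A, b, hAb⟩ := h x hxinj y
    exact ⟨fun l => (A l, b l),
      funext fun i => (realize_ext dims L A b (x i)).trans (hAb i)⟩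
  have hll : LocallyLipschitz F := locallyLipschitz_pi fun i => ll_realize dims L (x i)
  have h1 : dimH (univ : Set (Fin M → Fin (dims (L + 1)) → ℝ)) ≤
      dimH (univ : Set (PSpace dims L)) := by
    rw [← Set.range_eq_univ.mpr hsurj]
    exact dimH_range_le_of_locally_lipschitzOn hll
  rw [Real.dimH_univ_eq_finrank, Real.dimH_univ_eq_finrank] at h1
  have h2 : Module.finrank ℝ (Fin M → Fin (dims (L + 1)) → ℝ) ≤
      Module.finrank ℝ (PSpace dims L) := Nat.cast_le.mp h1
  have hrT : Module.finrank ℝ (Fin M → Fin (dims (L + 1)) → ℝ) = M * dims (L + 1) := by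
    simp [Module.finrank_pi_fintype, Module.finrank_fin_fun, Finset.sum_const,
      Fintype.card_fin, smul_eq_mul]
  have hrP : Module.finrank ℝ (PSpace dims L) =
      ∑ l ∈ Finset.range (L + 1), (dims (l + 1) * dims l + dims (l + 1)) := by
    rw [Module.finrank_pi_fintype,
      ← Fin.sum_univ_eq_sum_range (fun l => dims (l + 1) * dims l + dims (l + 1)) (L + 1)]
    refine Finset.sum_congr rfl fun l _ => ?_
    rw [Module.finrank_prod, Module.finrank_matrix, Module.finrank_fin_fun]
    simp [Fintype.card_fin]
  rw [hrT, hrP] at h2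
  exact h2
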